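/- The pair (X,ν) solves the Skorokhod reflection problem below the barrier f: ν is continuous and non-increasing on [0,T], ν(0) = −max(ψ(0) − f(0), 0), X(0) = min(ψ(0), f(0)), X(s) ≤ f(s) for all s ∈ [0,T], and for every s₀ ∈ [0,T) with X(s₀) < f(s₀) there exists δ > 0 such that ν is constant on (s₀ − δ, s₀ + δ) ∩ [0,T]. -/

import Mathlib

/-- the pair `(X, ν)` with `ν(s) = −sup_{u∈[0,s]} max(ψ(u)−f(u),0)` and
`X = ψ + ν` solves the Skorokhod reflection problem below the barrier `f`. -/
theorem stmt_4 (T : ℝ) (hT : 0 < T) (f ψ : ℝ → ℝ)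
    (hf_mono : MonotoneOn f (Set.Icc 0 T))
    (hf_lc : ∀ t ∈ Set.Ioc (0:ℝ) T, Filter.Tendsto f (nhdsWithin t (Set.Iio t)) (nhds (f t)))
    (hψ : ContinuousOn ψ (Set.Icc 0 T))
    (ν X : ℝ → ℝ)
    (hν : ∀ s, ν s = -sSup ((fun u => max (ψ u - f u) 0) '' Set.Icc 0 s))
    (hX : ∀ s, X s = ψ s + ν s) :
    ContinuousOn ν (Set.Icc 0 T) ∧ AntitoneOn ν (Set.Icc 0 T) ∧
    ν 0 = -max (ψ 0 - f 0) 0 ∧ X 0 = min (ψ 0) (f 0) ∧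
    (∀ s ∈ Set.Icc (0:ℝ) T, X s ≤ f s) ∧
    (∀ s₀ ∈ Set.Ico (0:ℝ) T, X s₀ < f s₀ →
      ∃ δ > 0, ∀ u ∈ Set.Ioo (s₀ - δ) (s₀ + δ) ∩ Set.Icc 0 T,
        ∀ w ∈ Set.Ioo (s₀ - δ) (s₀ + δ) ∩ Set.Icc 0 T, ν u = ν w) := by
  set g : ℝ → ℝ := fun u => max (ψ u - f u) 0 with hgdef
  set M : ℝ → ℝ := fun s => sSup (g '' Set.Icc 0 s) with hMdef
  have hgs : ∀ u, g u = max (ψ u - f u) 0 := fun u => by rw [hgdef]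
  have hMs : ∀ s, M s = sSup (g '' Set.Icc 0 s) := fun s => by rw [hMdef]
  have hνM : ∀ s, ν s = -M s := fun s => by rw [hν s, hMs s]
  have hg0 : ∀ u, 0 ≤ g u := fun u => by rw [hgs u]; exact le_max_right _ _
  obtain ⟨C, hC⟩ : ∃ C, ∀ u ∈ Set.Icc (0:ℝ) T, ψ u ≤ C := by
    obtain ⟨C, hC⟩ := (isCompact_Icc.image_of_continuousOn hψ).bddAbove
    exact ⟨C, fun u hu => hC (Set.mem_image_of_mem _ hu)⟩
  have hT0 : (0:ℝ) ∈ Set.Icc (0:ℝ) T := ⟨le_refl _, hT.le⟩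
  have hbdd : ∀ x : ℝ, x ≤ T → BddAbove (g '' Set.Icc 0 x) := by
    intro x hx
    refine ⟨max (C - f 0) 0, ?_⟩
    rintro _ ⟨u, hu, rfl⟩
    have hu' : u ∈ Set.Icc (0:ℝ) T := ⟨hu.1, hu.2.trans hx⟩
    have h1 : f 0 ≤ f u := hf_mono hT0 hu' hu.1
    have h2 : ψ u ≤ C := hC u hu'
    rw [hgs u]
    exact max_le_max (by linarith) le_rfl
  have hne : ∀ x : ℝ, 0 ≤ x → (g '' Set.Icc 0 x).Nonempty :=
    fun x hx => ⟨g 0, Set.mem_image_of_mem _ ⟨le_refl _, hx⟩⟩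
  have hgM : ∀ u s : ℝ, 0 ≤ u → u ≤ s → s ≤ T → g u ≤ M s := by
    intro u s h1 h2 h3
    rw [hMs s]
    exact le_csSup (hbdd s h3) (Set.mem_image_of_mem _ ⟨h1, h2⟩)
  have hM0 : ∀ s : ℝ, 0 ≤ s → s ≤ T → 0 ≤ M s :=
    fun s h1 h2 => (hg0 0).trans (hgM 0 s le_rfl h1 h2)
  have hMmono : ∀ x s : ℝ, 0 ≤ x → x ≤ s → s ≤ T → M x ≤ M s := by
    intro x s h1 h2 h3
    rw [hMs x, hMs s]
    exact csSup_le_csSup (hbdd s h3) (hne x h1)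
      (Set.image_mono (Set.Icc_subset_Icc le_rfl h2))
  -- left-continuity-type estimate for f
  have left_f : ∀ s ∈ Set.Icc (0:ℝ) T, ∀ ε : ℝ, 0 < ε →
      ∃ δ : ℝ, 0 < δ ∧ ∀ w ∈ Set.Icc (0:ℝ) T, s - δ < w → w ≤ s → f s - ε < f w := by
    intro s hs ε hε
    rcases eq_or_lt_of_le hs.1 with h0 | h0
    · refine ⟨1, one_pos, fun w hw _ hws => ?_⟩
      have hw0 : w = s := le_antisymm hws (h0 ▸ hw.1)
      rw [hw0]; linarith
    · have h := hf_lc s ⟨h0, hs.2⟩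
      have hmem : f ⁻¹' Set.Ioi (f s - ε) ∈ nhdsWithin s (Set.Iio s) :=
        h (Ioi_mem_nhds (by linarith))
      rw [mem_nhdsLT_iff_exists_Ioo_subset] at hmem
      obtain ⟨l, hl, hsub⟩ := hmem
      refine ⟨s - l, sub_pos.2 hl, fun w _ hlw hws => ?_⟩
      rcases eq_or_lt_of_le hws with rfl | hws'
      · linarith
      · exact hsub ⟨by linarith, hws'⟩
  -- continuity of M
  have hMcont : ContinuousOn M (Set.Icc 0 T) := by
    intro s hs
    rw [Metric.continuousWithinAt_iff]
    intro ε hε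
    obtain ⟨δ₁, hδ₁, hδ₁'⟩ := Metric.continuousWithinAt_iff.mp (hψ s hs) (ε/4) (by linarith)
    obtain ⟨δ₂, hδ₂, hδ₂'⟩ := left_f s hs (ε/4) (by linarith)
    refine ⟨min δ₁ δ₂, lt_min hδ₁ hδ₂, ?_⟩
    intro x hx hdist
    have hxd1 : dist x s < δ₁ := lt_of_lt_of_le hdist (min_le_left _ _)
    have hxd2 : dist x s < δ₂ := lt_of_lt_of_le hdist (min_le_right _ _)
    rw [Real.dist_eq, abs_lt] at hxd1 hxd2
    rcases le_total x s with hxs | hsx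
    · -- x ≤ s
      have h1 : M x ≤ M s := hMmono x s hx.1 hxs hs.2
      have hMx0 : 0 ≤ M x := hM0 x hx.1 hx.2
      have hgx : ψ x - f x ≤ M x :=
        le_trans (by rw [hgs x]; exact le_max_left _ _) (hgM x x hx.1 le_rfl hx.2)
      have hfx : f x ≤ f s := hf_mono hx hs hxs
      have hψx : dist (ψ x) (ψ s) < ε/4 := hδ₁' hx (by rw [Real.dist_eq, abs_lt]; constructor <;> linarith)
      rw [Real.dist_eq, abs_lt] at hψx
      have h2 : M s ≤ M x + 3*(ε/4) := by
        rw [hMs s]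
        apply csSup_le (hne s hs.1)
        rintro _ ⟨w, hw, rfl⟩
        rcases le_or_gt w x with hwx | hxw
        · have := hgM w x hw.1 hwx hx.2
          linarith
        · have hwT : w ∈ Set.Icc (0:ℝ) T := ⟨hx.1.trans hxw.le, hw.2.trans hs.2⟩
          have hψw : dist (ψ w) (ψ s) < ε/4 :=
            hδ₁' hwT (by rw [Real.dist_eq, abs_lt]; constructor <;> linarith [hw.2])
          rw [Real.dist_eq, abs_lt] at hψw
          have hfw : f s - ε/4 < f w := hδ₂' w hwT (by linarith) hw.2
          rw [hgs w]
          apply max_le <;> linarith [hψw.2]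
      rw [Real.dist_eq, abs_lt]
      constructor <;> linarith
    · -- s ≤ x
      have h1 : M s ≤ M x := hMmono s x hs.1 hsx hx.2
      have hMs0 : 0 ≤ M s := hM0 s hs.1 hs.2
      have hgss : ψ s - f s ≤ M s :=
        le_trans (by rw [hgs s]; exact le_max_left _ _) (hgM s s hs.1 le_rfl hs.2)
      have h2 : M x ≤ M s + ε/2 := by
        rw [hMs x]
        apply csSup_le (hne x hx.1)
        rintro _ ⟨w, hw, rfl⟩
        rcases le_or_gt w s with hws | hsw
        · have := hgM w s hw.1 hws hs.2
          linarith
        · have hwT : w ∈ Set.Icc (0:ℝ) T := ⟨hs.1.trans hsw.le, hw.2.trans hx.2⟩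
          have hψw : dist (ψ w) (ψ s) < ε/4 :=
            hδ₁' hwT (by rw [Real.dist_eq, abs_lt]; constructor <;> linarith [hw.2])
          rw [Real.dist_eq, abs_lt] at hψw
          have hfw : f s ≤ f w := hf_mono hs hwT hsw.le
          rw [hgs w]
          apply max_le <;> linarith [hψw.2]
      rw [Real.dist_eq, abs_lt]
      constructor <;> linarith
  refine ⟨?_, ?_, ?_, ?_, ?_, ?_⟩
  · -- continuity of ν
    rw [show ν = fun s => -M s from funext hνM]
    exact hMcont.neg
  · -- antitone
    intro a ha b hb hab
    rw [hνM a, hνM b]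
    exact neg_le_neg (hMmono a b ha.1 hab hb.2)
  · -- ν 0
    have hM00 : M 0 = g 0 := by
      rw [hMs 0, Set.Icc_self, Set.image_singleton, csSup_singleton]
    rw [hνM 0, hM00, hgs 0]
  · -- X 0
    have hM00 : M 0 = g 0 := by
      rw [hMs 0, Set.Icc_self, Set.image_singleton, csSup_singleton]
    rw [hX 0, hνM 0, hM00, hgs 0]
    rcases le_total (ψ 0) (f 0) with h | h
    · rw [max_eq_right (by linarith), min_eq_left h]; ring
    · rw [max_eq_left (by linarith), min_eq_right h]; ring
  · -- X ≤ f
    intro s hs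
    rw [hX s, hνM s]
    have h1 : ψ s - f s ≤ M s :=
      le_trans (by rw [hgs s]; exact le_max_left _ _) (hgM s s hs.1 le_rfl hs.2)
    linarith
  · -- flatness
    intro s₀ hs₀ hXs₀
    rw [hX s₀, hνM s₀] at hXs₀
    have hs₀T : s₀ ∈ Set.Icc (0:ℝ) T := ⟨hs₀.1, hs₀.2.le⟩
    set ε := M s₀ - (ψ s₀ - f s₀) with hεdef
    have hε : 0 < ε := by rw [hεdef]; linarith
    obtain ⟨δ₁, hδ₁, hδ₁'⟩ := Metric.continuousWithinAt_iff.mp (hψ s₀ hs₀T) (ε/4) (by linarith)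
    obtain ⟨δ₂, hδ₂, hδ₂'⟩ := left_f s₀ hs₀T (ε/4) (by linarith)
    have hlt : M s₀ - ε/2 < sSup (g '' Set.Icc 0 s₀) := by rw [← hMs s₀]; linarith
    obtain ⟨a, ⟨u₀, hu₀s, rfl⟩, hu₀⟩ := exists_lt_of_lt_csSup (hne s₀ hs₀.1) hlt
    refine ⟨min δ₁ δ₂, lt_min hδ₁ hδ₂, ?_⟩
    set δ := min δ₁ δ₂ with hδdef
    have hδpos : 0 < δ := lt_min hδ₁ hδ₂
    have hδd1 : δ ≤ δ₁ := min_le_left _ _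
    have hδd2 : δ ≤ δ₂ := min_le_right _ _
    set b := max (s₀ - δ) 0 with hbdef
    have hb0 : 0 ≤ b := le_max_right _ _
    have hbT : b ≤ T := max_le (by linarith [hs₀.2]) hT.le
    have key : ∀ x, s₀ - δ < x → x < s₀ + δ → x ∈ Set.Icc (0:ℝ) T →
        ψ x - f x < M s₀ - ε/2 := by
      intro x h1 h2 hxT
      have hψx : dist (ψ x) (ψ s₀) < ε/4 :=
        hδ₁' hxT (by rw [Real.dist_eq, abs_lt]; constructor <;> linarith)
      rw [Real.dist_eq, abs_lt] at hψx
      have hfx : f s₀ - ε/4 < f x := by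
        rcases le_total x s₀ with hxs | hsx
        · exact hδ₂' x hxT (by linarith) hxs
        · have : f s₀ ≤ f x := hf_mono hs₀T hxT hsx
          linarith
      have hεeq : ε = M s₀ - (ψ s₀ - f s₀) := hεdef
      linarith [hψx.2]
    have hcb : M s₀ - ε/2 ≤ M b := by
      rcases le_or_gt u₀ b with h | h
      · have := hgM u₀ b hu₀s.1 h hbT
        linarith
      · have hu₀T : u₀ ∈ Set.Icc (0:ℝ) T := ⟨hu₀s.1, hu₀s.2.trans hs₀.2.le⟩
        have h1 : s₀ - δ < u₀ := lt_of_le_of_lt (le_max_left _ _) h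
        have h2 : u₀ < s₀ + δ := by linarith [hu₀s.2]
        have hk := key u₀ h1 h2 hu₀T
        have hg : g u₀ ≤ max (M s₀ - ε/2) 0 := by
          rw [hgs u₀]; exact max_le_max hk.le le_rfl
        have hneg : M s₀ - ε/2 < 0 := by
          by_contra hcon
          push_neg at hcon
          rw [max_eq_left hcon] at hg
          linarith
        linarith [hM0 b hb0 hbT]
    have hkey2 : ∀ x, s₀ - δ < x → x < s₀ + δ → x ∈ Set.Icc (0:ℝ) T → g x ≤ M b := by
      intro x h1 h2 h3
      have hk := key x h1 h2 h3
      rw [hgs x]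
      exact max_le (by linarith) (hM0 b hb0 hbT)
    have hMconst : ∀ u, s₀ - δ < u → u < s₀ + δ → u ∈ Set.Icc (0:ℝ) T → M u = M b := by
      intro u h1 h2 hu
      have hbu : b ≤ u := max_le h1.le hu.1
      refine le_antisymm ?_ (hMmono b u hb0 hbu hu.2)
      rw [hMs u]
      apply csSup_le (hne u hu.1)
      rintro _ ⟨w, hw, rfl⟩
      rcases le_or_gt w b with hwb | hbw
      · exact hgM w b hw.1 hwb hbT
      · exact hkey2 w (lt_of_le_of_lt (le_max_left _ _) hbw)
          (lt_of_le_of_lt hw.2 h2) ⟨hw.1, hw.2.trans hu.2⟩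
    intro u hu w hw
    rw [hνM u, hνM w, hMconst u hu.1.1 hu.1.2 hu.2, hMconst w hw.1.1 hw.1.2 hw.2]
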